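/- Let V be a real inner product space, let s ∈ V, let d₁, u ∈ V be orthonormal vectors, and let δ > 0. Fix θ with 0 < θ < π/2, let d(φ) = cos φ • d₁ + sin φ • u, and let p₁ = s + δ • d₁ and pₙ = s + (δ / cos θ) • d(θ). Then for every φ with 0 ≤ φ ≤ θ, the shadow of s cast along d(φ), namely s + (δ / cos φ) • d(φ), lies on the closed segment joining p₁ and pₙ. -/

import Mathlib

open scoped RealInnerProductSpace

/-- As the light direction rotates from `d₁ = d(0)` to `d(θ)`, the shadow of
`s` cast along `d(φ)` for any `0 ≤ φ ≤ θ` lies on the closed segment joining the initial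
shadow `p₁ = s + δ • d₁` and the final shadow `pₙ = s + (δ / cos θ) • d(θ)`. -/
theorem shadow_lies_on_segment
    {V : Type*} [NormedAddCommGroup V] [InnerProductSpace ℝ V]
    (s d₁ u : V) (hd₁ : ‖d₁‖ = 1) (hu : ‖u‖ = 1) (hortho : ⟪d₁, u⟫ = 0)
    (δ : ℝ) (hδ : 0 < δ) (θ : ℝ) (hθ0 : 0 < θ) (hθ : θ < Real.pi / 2) :
    ∀ φ : ℝ, 0 ≤ φ → φ ≤ θ →
      s + (δ / Real.cos φ) • (Real.cos φ • d₁ + Real.sin φ • u) ∈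
        segment ℝ (s + δ • d₁)
          (s + (δ / Real.cos θ) • (Real.cos θ • d₁ + Real.sin θ • u)) := by
  intro φ hφ0 hφθ
  have hcθ : 0 < Real.cos θ := Real.cos_pos_of_mem_Ioo ⟨by linarith [Real.pi_pos], hθ⟩
  have hcφ : 0 < Real.cos φ := Real.cos_pos_of_mem_Ioo ⟨by linarith [Real.pi_pos], by linarith⟩
  have htθ : 0 < Real.tan θ := Real.tan_pos_of_pos_of_lt_pi_div_two hθ0 hθ
  have htφ : 0 ≤ Real.tan φ := by
    rw [Real.tan_eq_sin_div_cos]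
    exact div_nonneg (Real.sin_nonneg_of_nonneg_of_le_pi hφ0 (by linarith [Real.pi_pos])) hcφ.le
  have htle : Real.tan φ ≤ Real.tan θ := by
    rcases eq_or_lt_of_le hφθ with h | h
    · rw [h]
    · exact le_of_lt (Real.tan_lt_tan_of_nonneg_of_lt_pi_div_two hφ0 hθ h)
  set t : ℝ := Real.tan φ / Real.tan θ with ht
  have ht0 : 0 ≤ t := div_nonneg htφ htθ.le
  have ht1 : t ≤ 1 := (div_le_one htθ).mpr htle
  refine ⟨1 - t, t, by linarith, ht0, by ring, ?_⟩
  have key : ∀ ψ : ℝ, Real.cos ψ ≠ 0 →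
      s + (δ / Real.cos ψ) • (Real.cos ψ • d₁ + Real.sin ψ • u)
        = s + δ • d₁ + (δ * Real.tan ψ) • u := by
    intro ψ hψ
    rw [Real.tan_eq_sin_div_cos]
    match_scalars <;> field_simp
  rw [key φ hcφ.ne', key θ hcθ.ne']
  have : t * (δ * Real.tan θ) = δ * Real.tan φ := by
    field_simp [ht]
    ring
    rw [ht, div_mul_cancel₀ _ htθ.ne']
  match_scalars <;> field_simp [ht] <;> ring
  rw [ht, div_mul_cancel₀ _ htθ.ne']
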